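/- Let X be a finite metric space with distance d, let s : Finset X → ℝ be a non-negative monotone set function, λ > 0, n ≥ 1, α ∈ (0,1], and let ã := (1/2)·s + λ·div. Let x₀, …, x_{n−1} be pairwise distinct elements of X forming an α-approximate greedy sequence for the set function ã, with partial sets B_i and output B_n (so |B_i| = i). Let γ̂ ∈ (0,1] be a lower bound on the submodularity ratio γ_{B_n ∪ B*, n}(s), where B* ⊆ X is any set with |B*| = n. Then s(B_n) + λ·div(B_n) ≥ (α·γ̂/2)·(s(B*) + λ·div(B*)). -/

import Mathlib

open Finset

/-- `d(A,B) = Σ_{x∈A} Σ_{x'∈B} d(x,x')`. -/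
noncomputable def setDist {X : Type*} [MetricSpace X] (A B : Finset X) : ℝ :=
  ∑ x ∈ A, ∑ x' ∈ B, dist x x'

/-- Sum-dispersion `div(B) = (1/2)·d(B,B)`. -/
noncomputable def sumDisp {X : Type*} [MetricSpace X] (B : Finset X) : ℝ :=
  (1 / 2) * setDist B B

/-- Marginal gain `Δ_a(x ∣ B) = a(B ∪ {x}) − a(B)`. -/
noncomputable def margGain {X : Type*} [DecidableEq X] (a : Finset X → ℝ) (x : X)
    (B : Finset X) : ℝ :=
  a (insert x B) - a B

/-- The partial set `B_i = {x₀, …, x_{i−1}}` of a sequence `xs`. -/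
def partialSet {X : Type*} [DecidableEq X] {n : ℕ} (xs : Fin n → X) (i : ℕ) : Finset X :=
  (Finset.univ.filter (fun j : Fin n => (j : ℕ) < i)).image xs

section Plumb
variable {X : Type*} [MetricSpace X] [DecidableEq X]
set_option linter.unusedSectionVars false
set_option linter.unusedVariables false

lemma setDist_nonneg (A B : Finset X) : 0 ≤ setDist A B :=
  Finset.sum_nonneg fun _ _ => Finset.sum_nonneg fun _ _ => dist_nonneg

lemma setDist_symm (A B : Finset X) : setDist A B = setDist B A := by
  rw [setDist, setDist, Finset.sum_comm]
  simp [dist_comm]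

lemma setDist_mono_right (A : Finset X) {B C : Finset X} (h : B ⊆ C) :
    setDist A B ≤ setDist A C :=
  Finset.sum_le_sum fun x _ =>
    Finset.sum_le_sum_of_subset_of_nonneg h (fun _ _ _ => dist_nonneg)

lemma setDist_union_right (A : Finset X) {B C : Finset X} (h : Disjoint B C) :
    setDist A (B ∪ C) = setDist A B + setDist A C := by
  unfold setDist
  rw [← Finset.sum_add_distrib]
  exact Finset.sum_congr rfl fun x _ => Finset.sum_union h

lemma setDist_union_left {A B : Finset X} (C : Finset X) (h : Disjoint A B) :
    setDist (A ∪ B) C = setDist A C + setDist B C := by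
  unfold setDist; exact Finset.sum_union h

lemma sumDisp_nonneg (B : Finset X) : 0 ≤ sumDisp B := by
  have := setDist_nonneg B B
  unfold sumDisp; linarith

lemma sumDisp_empty : sumDisp (∅ : Finset X) = 0 := by simp [sumDisp, setDist]

lemma sumDisp_singleton (x : X) : sumDisp ({x} : Finset X) = 0 := by
  simp [sumDisp, setDist]

lemma sumDisp_mono {A B : Finset X} (h : A ⊆ B) : sumDisp A ≤ sumDisp B := by
  have : setDist A A ≤ setDist B B := by
    refine le_trans (setDist_mono_right A h) ?_
    unfold setDist
    exact Finset.sum_le_sum_of_subset_of_nonneg h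
      (fun _ _ _ => Finset.sum_nonneg fun _ _ => dist_nonneg)
  unfold sumDisp; linarith

lemma sumDisp_insert {x : X} {B : Finset X} (hx : x ∉ B) :
    sumDisp (insert x B) = sumDisp B + setDist {x} B := by
  have h1 : setDist (insert x B) (insert x B)
      = setDist {x} (insert x B) + setDist B (insert x B) := by
    rw [← setDist_union_left (insert x B) (by simp [Finset.disjoint_left, hx]),
      ← Finset.insert_eq]
  have h2 : setDist {x} (insert x B) = setDist {x} B := by
    unfold setDist; simp [Finset.sum_insert hx]
  have h3 : setDist B (insert x B) = setDist B {x} + setDist B B := by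
    rw [← setDist_union_right B (by simp [Finset.disjoint_right, hx]),
      ← Finset.insert_eq]
  have h4 : setDist B {x} = setDist {x} B := setDist_symm _ _
  unfold sumDisp
  rw [h1, h2, h3, h4]; ring

/-- Hub lemma: distances within `A` bounded via hubs in `B`. -/
lemma hub_lemma (A B : Finset X) :
    (B.card : ℝ) * setDist A A ≤ 2 * ((A.card : ℝ) - 1) * setDist A B := by
  classical
  set sd : X → ℝ := fun x => ∑ z ∈ B, dist x z with hsd
  have hsda : setDist A B = ∑ v ∈ A, sd v := rfl
  have h0 : setDist A A = ∑ v ∈ A, ∑ v' ∈ A.erase v, dist v v' := by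
    unfold setDist
    refine Finset.sum_congr rfl fun v hv => ?_
    rw [Finset.sum_erase_eq_sub hv]; simp
  have key : (B.card : ℝ) * setDist A A
      ≤ ∑ v ∈ A, ∑ v' ∈ A.erase v, (sd v + sd v') := by
    rw [h0, Finset.mul_sum]
    refine Finset.sum_le_sum fun v hv => ?_
    rw [Finset.mul_sum]
    refine Finset.sum_le_sum fun v' hv' => ?_
    calc (B.card : ℝ) * dist v v' = ∑ _z ∈ B, dist v v' := by
          rw [Finset.sum_const, nsmul_eq_mul]
      _ ≤ ∑ z ∈ B, (dist v z + dist v' z) :=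
          Finset.sum_le_sum fun z _ => dist_triangle_right v v' z
      _ = sd v + sd v' := by rw [Finset.sum_add_distrib]
  refine key.trans (le_of_eq ?_)
  have hcalc : ∀ v ∈ A, ∑ v' ∈ A.erase v, (sd v + sd v')
      = ((A.card : ℝ) - 1) * sd v + (setDist A B - sd v) := by
    intro v hv
    rw [Finset.sum_add_distrib, Finset.sum_const, Finset.sum_erase_eq_sub hv,
      Finset.card_erase_of_mem hv, nsmul_eq_mul, hsda]
    have : (1 : ℕ) ≤ A.card := Finset.card_pos.mpr ⟨v, hv⟩
    push_cast [Nat.cast_sub this]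
    ring
  rw [Finset.sum_congr rfl hcalc, Finset.sum_add_distrib, ← Finset.mul_sum, ← hsda,
    Finset.sum_sub_distrib, Finset.sum_const, ← hsda, nsmul_eq_mul]
  ring

end Plumb

set_option maxHeartbeats 1000000 in

lemma core_alg (m k j a1 a2 a3 b : ℝ)
    (hm : 1 ≤ m) (hk : 0 ≤ k) (hj : 0 ≤ j) (hjm : j ≤ m)
    (ha1 : 0 ≤ a1) (ha2 : 0 ≤ a2) (ha3 : 0 ≤ a3) (hb : 0 ≤ b)
    (f1 : j * a1 ≤ 2*(m-1)*b) (f2 : k * a1 ≤ 2*(m-1)*a3) (f3 : m * a2 ≤ 2*(k-1)*a3)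
    (hk01 : k = 0 ∨ 1 ≤ k) (hm12 : m = 1 ∨ 2 ≤ m) :
    (j+k)*m*(a1+a2+2*a3) ≤ 2*(m+k)*(m+k-1)*(b+a3) := by
  rcases hk01 with hk0 | hk1
  · -- k = 0
    subst hk0
    have ha20 : a2 = 0 := by nlinarith
    have ha30 : a3 = 0 := by nlinarith
    subst ha20; subst ha30
    nlinarith [mul_le_mul_of_nonneg_left f1 (show (0:ℝ) ≤ m by linarith)]
  rcases hm12 with hm1 | hm2
  · -- m = 1
    subst hm1
    have ha10 : a1 = 0 := by nlinarith
    subst ha10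
    nlinarith [mul_le_mul_of_nonneg_left f3 (show (0:ℝ) ≤ j + k by linarith),
      mul_nonneg (mul_nonneg (show (0:ℝ) ≤ 1 - j by linarith) hk) ha3,
      mul_nonneg (mul_nonneg hb hk) hk, mul_nonneg hb hk]
  -- 1 ≤ k, 2 ≤ m
  have hn1 : (0:ℝ) ≤ (m+k)*(m+k-1) := by nlinarith
  have hm1pos : (0:ℝ) < m - 1 := by linarith
  rcases le_or_gt ((j+k)*m*(m-1)) (j*(m+k)*(m+k-1)) with hc | hc
  · -- case C1
    have h1 : (m-1) * ((j+k)*m*a1) ≤ (m-1) * (2*(m+k)*(m+k-1)*b) := by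
      nlinarith [mul_le_mul_of_nonneg_right hc ha1,
        mul_le_mul_of_nonneg_left f1 hn1]
    have ha1m : (j+k)*m*a1 ≤ 2*(m+k)*(m+k-1)*b :=
      le_of_mul_le_mul_left (by linarith) hm1pos
    have ha2m : (j+k)*(m*a2) ≤ (j+k)*(2*(k-1)*a3) :=
      mul_le_mul_of_nonneg_left f3 (by linarith)
    nlinarith [mul_le_mul_of_nonneg_right (show j+k ≤ m+k by linarith)
      (mul_nonneg (show (0:ℝ) ≤ m+k-1 by linarith) ha3)]
  · -- case C2
    have hBq : (0:ℝ) < (j+k)*m*(m-1) - j*(m+k)*(m+k-1) := by linarith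
    have key1 : (k*(m-1)) * ((j+k)*m*a1)
        ≤ k*(m-1)*(2*(m+k)*(m+k-1)*b)
          + (m-1)*((j+k)*m*(m-1) - j*(m+k)*(m+k-1))*(2*a3) := by
      nlinarith [mul_le_mul_of_nonneg_left f1
          (show (0:ℝ) ≤ (m+k)*(m+k-1)*k by positivity),
        mul_le_mul_of_nonneg_left f2 hBq.le]
    have key2 : (j+k)*m*(m-1) - j*(m+k)*(m+k-1) ≤ k*((m+k)-(j+k))*(m+k-1) := by
      nlinarith [mul_nonneg (mul_nonneg (show (0:ℝ) ≤ j+k by linarith)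
        (show (0:ℝ) ≤ m by linarith)) hk]
    have H3 : (k*(m-1)) * ((j+k)*m*a2) ≤ (k*(m-1)) * (2*(j+k)*(k-1)*a3) := by
      nlinarith [mul_le_mul_of_nonneg_left f3
        (show (0:ℝ) ≤ (j+k)*k*(m-1) by positivity)]
    have key2p := mul_le_mul_of_nonneg_right key2
        (show (0:ℝ) ≤ 2*(m-1)*a3 by positivity)
    have hfin : (k*(m-1)) * ((j+k)*m*(a1+a2+2*a3))
        ≤ (k*(m-1)) * (2*(m+k)*(m+k-1)*(b+a3)) := by
      linarith [key1, H3, key2p]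
    exact le_of_mul_le_mul_left hfin (by positivity)

section Core
variable {X : Type*} [MetricSpace X] [DecidableEq X]
set_option linter.unusedSectionVars false

/-- The core metric lemma: `|G| * |O \ G| * div(O) ≤ |O| * (|O|-1) * d(O\G, G)`. -/
lemma core_lemma (O G : Finset X) (hcard : G.card ≤ O.card) (hne : (O \ G).Nonempty) :
    (G.card : ℝ) * (((O \ G).card : ℝ)) * sumDisp O
      ≤ (O.card : ℝ) * ((O.card : ℝ) - 1) * setDist (O \ G) G := by
  classical
  set S := O \ G with hS
  set K := O ∩ G with hK
  set GO := G \ O with hGO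
  have hdSK : Disjoint S K := Finset.disjoint_sdiff_inter O G
  have hdGOK : Disjoint GO (G ∩ O) := Finset.disjoint_sdiff_inter G O
  have hOun : S ∪ K = O := Finset.sdiff_union_inter O G
  have hGun : GO ∪ (G ∩ O) = G := Finset.sdiff_union_inter G O
  have hIC : G ∩ O = K := Finset.inter_comm G O
  have hcards : S.card + K.card = O.card := Finset.card_sdiff_add_card_inter O G
  have hcardg : GO.card + K.card = G.card := by
    have := Finset.card_sdiff_add_card_inter G O
    rwa [hIC] at this
  set a1 := setDist S S with ha1d
  set a2 := setDist K K with ha2d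
  set a3 := setDist S K with ha3d
  set b := setDist S GO with hbd
  have hOO : setDist O O = a1 + a2 + 2*a3 := by
    rw [← hOun, setDist_union_left _ hdSK, setDist_union_right _ hdSK,
      setDist_union_right _ hdSK, setDist_symm K S]
    ring
  have hSG : setDist S G = b + a3 := by
    conv_lhs => rw [← hGun]
    rw [setDist_union_right _ hdGOK, hIC]
  have f1 := hub_lemma S GO
  have f2 := hub_lemma S K
  have f3' := hub_lemma K S
  have f3 : (S.card : ℝ) * a2 ≤ 2*((K.card:ℝ)-1)*a3 := by
    rwa [setDist_symm K S] at f3'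
  have hm : 1 ≤ (S.card : ℝ) := by
    have := Finset.card_pos.mpr hne
    exact_mod_cast this
  have hjm : (GO.card : ℝ) ≤ (S.card : ℝ) := by
    have h2 : GO.card + K.card ≤ S.card + K.card := by rw [hcardg, hcards]; exact hcard
    have : GO.card ≤ S.card := Nat.le_of_add_le_add_right h2
    exact_mod_cast this
  have hk01 : (K.card : ℝ) = 0 ∨ 1 ≤ (K.card : ℝ) := by
    rcases Nat.eq_zero_or_pos K.card with h | h
    · left; exact_mod_cast h
    · right; exact_mod_cast h
  have hm12 : (S.card : ℝ) = 1 ∨ 2 ≤ (S.card : ℝ) := by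
    rcases Nat.lt_or_ge S.card 2 with h | h
    · left
      have hpos := Finset.card_pos.mpr hne
      have : S.card = 1 := by omega
      exact_mod_cast this
    · right; exact_mod_cast h
  have main := core_alg (S.card : ℝ) (K.card : ℝ) (GO.card : ℝ) a1 a2 a3 b
    hm (by positivity) (by positivity) hjm
    (setDist_nonneg _ _) (setDist_nonneg _ _) (setDist_nonneg _ _) (setDist_nonneg _ _)
    f1 f2 f3 hk01 hm12
  have hOcard : (O.card : ℝ) = (S.card : ℝ) + (K.card : ℝ) := by exact_mod_cast hcards.symm
  have hGcard : (G.card : ℝ) = (GO.card : ℝ) + (K.card : ℝ) := by exact_mod_cast hcardg.symm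
  rw [sumDisp, hOO, hSG, hOcard, hGcard]
  linarith [main]
end Core

section PS
variable {X : Type*} [DecidableEq X] {n : ℕ} (xs : Fin n → X)
set_option linter.unusedSectionVars false

lemma partialSet_zero : partialSet xs 0 = ∅ := by simp [partialSet]

lemma partialSet_mono {i i' : ℕ} (h : i ≤ i') : partialSet xs i ⊆ partialSet xs i' := by
  apply Finset.image_subset_image
  intro j hj
  simp only [Finset.mem_filter] at *
  exact ⟨hj.1, lt_of_lt_of_le hj.2 h⟩

lemma filter_succ_eq (t : ℕ) (ht : t < n) :
    Finset.univ.filter (fun j : Fin n => (j : ℕ) < t + 1)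
      = insert ⟨t, ht⟩ (Finset.univ.filter (fun j : Fin n => (j : ℕ) < t)) := by
  ext j
  simp only [Finset.mem_filter, Finset.mem_insert, Finset.mem_univ, true_and, Fin.ext_iff]
  omega

lemma partialSet_succ (t : ℕ) (ht : t < n) :
    partialSet xs (t + 1) = insert (xs ⟨t, ht⟩) (partialSet xs t) := by
  unfold partialSet
  rw [filter_succ_eq t ht, Finset.image_insert]

lemma not_mem_partialSet (hxs : Function.Injective xs) (i : Fin n) :
    xs i ∉ partialSet xs (i : ℕ) := by
  unfold partialSet
  simp only [Finset.mem_image, Finset.mem_filter, Finset.mem_univ, true_and, not_exists]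
  rintro j ⟨hj, heq⟩
  have := hxs heq
  subst this
  omega

lemma partialSet_card (hxs : Function.Injective xs) :
    ∀ i, i ≤ n → (partialSet xs i).card = i := by
  intro i
  induction i with
  | zero => intro _; simp [partialSet_zero]
  | succ t ih =>
    intro ht
    have ht' : t < n := by omega
    rw [partialSet_succ xs t ht',
      Finset.card_insert_of_notMem (not_mem_partialSet xs hxs ⟨t, ht'⟩), ih (by omega)]

lemma telescope (a : Finset X → ℝ) :
    ∀ t, t ≤ n → a (partialSet xs t) = a ∅
      + ∑ i ∈ Finset.univ.filter (fun j : Fin n => (j : ℕ) < t),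
          margGain a (xs i) (partialSet xs (i : ℕ)) := by
  intro t
  induction t with
  | zero => intro _; simp [partialSet_zero]
  | succ t ih =>
    intro ht
    have ht' : t < n := by omega
    have hm : margGain a (xs ⟨t, ht'⟩) (partialSet xs ((⟨t, ht'⟩ : Fin n) : ℕ))
        = a (partialSet xs (t+1)) - a (partialSet xs t) := by
      simp only [margGain, Fin.val_mk, partialSet_succ xs t ht']
    rw [filter_succ_eq t ht', Finset.sum_insert (by simp), hm, ih (by omega)]
    ring

lemma telescope_top (a : Finset X → ℝ) :
    a (partialSet xs n) = a ∅ + ∑ i : Fin n, margGain a (xs i) (partialSet xs (i : ℕ)) := by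
  have h := telescope xs a n le_rfl
  rwa [show Finset.univ.filter (fun j : Fin n => (j : ℕ) < n) = Finset.univ by
    ext j; simp [j.isLt]] at h

lemma s_mono_of_marg (s : Finset X → ℝ) (hs : ∀ (B : Finset X) (x : X), 0 ≤ margGain s x B)
    {A B : Finset X} (h : A ⊆ B) : s A ≤ s B := by
  have key : ∀ C : Finset X, s A ≤ s (A ∪ C) := by
    intro C
    induction C using Finset.induction with
    | empty => simp
    | insert c C' hx ih =>
      rw [Finset.union_insert]
      have := hs (A ∪ C') c
      unfold margGain at this
      linarith
  have := key B
  rwa [Finset.union_eq_right.mpr h] at this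
end PS


set_option maxHeartbeats 1000000 in
theorem approx_greedy_diversified_near_submodular_bound
    {X : Type*} [Fintype X] [MetricSpace X] [DecidableEq X]
    (s : Finset X → ℝ)
    (hs_nonneg : ∀ B : Finset X, 0 ≤ s B)
    (hs_mono : ∀ (B : Finset X) (x : X), 0 ≤ margGain s x B)
    (lam : ℝ) (hlam : 0 < lam)
    (n : ℕ) (hn : 1 ≤ n)
    (α : ℝ) (hα0 : 0 < α) (hα1 : α ≤ 1)
    (xs : Fin n → X) (hxs : Function.Injective xs)
    (hgreedy : ∀ i : Fin n, ∀ x : X, x ∉ partialSet xs i →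
      α * margGain (fun C => (1 / 2) * s C + lam * sumDisp C) x (partialSet xs i) ≤
        margGain (fun C => (1 / 2) * s C + lam * sumDisp C) (xs i) (partialSet xs i))
    (Bstar : Finset X) (hBstar : Bstar.card = n)
    (γ : ℝ) (hγ0 : 0 < γ) (hγ1 : γ ≤ 1)
    (hγ : ∀ S : Finset X, S.card ≤ n → ∀ B' ⊆ (partialSet xs n ∪ Bstar) \ S,
      γ * (s (B' ∪ S) - s B') ≤ ∑ x ∈ S, margGain s x B') :
    (α * γ / 2) * (s Bstar + lam * sumDisp Bstar) ≤
      s (partialSet xs n) + lam * sumDisp (partialSet xs n) := by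
  classical
  have hsmono : ∀ {A B : Finset X}, A ⊆ B → s A ≤ s B :=
    fun h => s_mono_of_marg s hs_mono h
  set T : Finset X → ℝ := fun C => (1 / 2) * s C + lam * sumDisp C with hT
  set B := partialSet xs n with hB
  set O := Bstar with hO
  have hnR : (0:ℝ) < (n:ℝ) := by exact_mod_cast hn
  have hag : α * γ ≤ 1 := mul_le_one₀ hα1 hγ0.le hγ1
  have hBsub : ∀ i : Fin n, partialSet xs (i:ℕ) ⊆ B :=
    fun i => partialSet_mono xs (le_of_lt i.isLt)
  by_cases hOB : O ⊆ B
  · -- easy case: the optimum is contained in the greedy output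
    have h1 : s O ≤ s B := hsmono hOB
    have h2 : sumDisp O ≤ sumDisp B := sumDisp_mono hOB
    have hq : 0 ≤ s O + lam * sumDisp O := by
      have := hs_nonneg O
      have := mul_nonneg hlam.le (sumDisp_nonneg O)
      linarith
    nlinarith [mul_nonneg (sub_nonneg.mpr hag) hq,
      mul_nonneg (mul_nonneg hα0.le hγ0.le) hq,
      mul_le_mul_of_nonneg_left h2 hlam.le]
  · obtain ⟨u, huO, huB⟩ := Finset.not_subset.mp hOB
    have hmargT : ∀ (x : X) (C : Finset X), x ∉ C →
        margGain T x C = (1/2) * margGain s x C + lam * setDist {x} C := by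
      intro x C hx
      simp only [hT, margGain]
      rw [sumDisp_insert hx]
      ring
    -- per-step key inequality
    have key : ∀ i : Fin n,
        α*(γ/2)*((s O - s B)/(n:ℝ))
          + α*lam*(((i:ℕ):ℝ) * sumDisp O/((n:ℝ)*((n:ℝ)-1)))
          ≤ margGain T (xs i) (partialSet xs (i:ℕ)) := by
      intro i
      have hSine : (O \ partialSet xs (i:ℕ)).Nonempty :=
        ⟨u, Finset.mem_sdiff.mpr ⟨huO, fun hc => huB (hBsub i hc)⟩⟩
      have hmpos : (0:ℝ) < (((O \ partialSet xs (i:ℕ)).card):ℝ) := by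
        exact_mod_cast Finset.card_pos.mpr hSine
    
      have hmn : (((O \ partialSet xs (i:ℕ)).card):ℝ) ≤ (n:ℝ) := by
        have h := Finset.card_le_card (Finset.sdiff_subset (s := O) (t := partialSet xs (i:ℕ)))
        rw [hO] at h ⊢
        rw [hBstar] at h
        exact_mod_cast h
      have hGicard : (partialSet xs (i:ℕ)).card = (i:ℕ) :=
        partialSet_card xs hxs _ (le_of_lt i.isLt)
      -- greedy averaging
      have hg1 : ∑ x ∈ O \ partialSet xs (i:ℕ), α * margGain T x (partialSet xs (i:ℕ))
          ≤ (((O \ partialSet xs (i:ℕ)).card):ℝ) * margGain T (xs i) (partialSet xs (i:ℕ)) := by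
        calc ∑ x ∈ O \ partialSet xs (i:ℕ), α * margGain T x (partialSet xs (i:ℕ))
            ≤ ∑ _x ∈ O \ partialSet xs (i:ℕ), margGain T (xs i) (partialSet xs (i:ℕ)) :=
              Finset.sum_le_sum (fun x hx => hgreedy i x (Finset.mem_sdiff.mp hx).2)
          _ = _ := by rw [Finset.sum_const, nsmul_eq_mul]
      have hsplit : ∑ x ∈ O \ partialSet xs (i:ℕ), α * margGain T x (partialSet xs (i:ℕ))
          = α * ((1/2) * (∑ x ∈ O \ partialSet xs (i:ℕ), margGain s x (partialSet xs (i:ℕ)))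
              + lam * setDist (O \ partialSet xs (i:ℕ)) (partialSet xs (i:ℕ))) := by
        rw [← Finset.mul_sum]
        congr 1
        rw [Finset.sum_congr rfl (fun x hx => hmargT x _ (Finset.mem_sdiff.mp hx).2),
          Finset.sum_add_distrib, ← Finset.mul_sum, ← Finset.mul_sum]
        congr 2
        unfold setDist
        exact Finset.sum_congr rfl (fun x _ => by rw [Finset.sum_singleton])
      have hγapp : γ * (s (partialSet xs (i:ℕ) ∪ O) - s (partialSet xs (i:ℕ)))
          ≤ ∑ x ∈ O \ partialSet xs (i:ℕ), margGain s x (partialSet xs (i:ℕ)) := by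
        have hcd : (O \ partialSet xs (i:ℕ)).card ≤ n := by
          have h := Finset.card_le_card (Finset.sdiff_subset (s := O) (t := partialSet xs (i:ℕ)))
          rw [hO] at h ⊢
          rw [hBstar] at h
          exact h
        have hsub2 : partialSet xs (i:ℕ) ⊆ (partialSet xs n ∪ O) \ (O \ partialSet xs (i:ℕ)) := by
          intro x hx
          rw [Finset.mem_sdiff]
          constructor
          · exact Finset.mem_union_left _ (hBsub i hx)
          · rw [Finset.mem_sdiff]
            push_neg
            intro _; exact hx
        have h := hγ (O \ partialSet xs (i:ℕ)) hcd (partialSet xs (i:ℕ)) hsub2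
        rwa [Finset.union_sdiff_self_eq_union] at h
      have claim : α * ((γ/2) * (s (partialSet xs (i:ℕ) ∪ O) - s (partialSet xs (i:ℕ)))
            + lam * setDist (O \ partialSet xs (i:ℕ)) (partialSet xs (i:ℕ)))
          ≤ (((O \ partialSet xs (i:ℕ)).card):ℝ) * margGain T (xs i) (partialSet xs (i:ℕ)) := by
        refine le_trans ?_ (le_trans (le_of_eq hsplit.symm) hg1)
        apply mul_le_mul_of_nonneg_left _ hα0.le
        linarith [hγapp]
      have part1 : (s O - s B)/(n:ℝ)
          ≤ (s (partialSet xs (i:ℕ) ∪ O) - s (partialSet xs (i:ℕ)))/(((O \ partialSet xs (i:ℕ)).card):ℝ) := by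
        have hup : s (partialSet xs (i:ℕ)) ≤ s (partialSet xs (i:ℕ) ∪ O) :=
          hsmono Finset.subset_union_left
        rcases le_or_gt (s O) (s B) with h | h
        · refine le_trans ?_ (div_nonneg (by linarith) hmpos.le)
          apply div_nonpos_of_nonpos_of_nonneg (by linarith) hnR.le
        · rw [div_le_div_iff₀ hnR hmpos]
          have e1 : s O ≤ s (partialSet xs (i:ℕ) ∪ O) := hsmono Finset.subset_union_right
          have e2 : s (partialSet xs (i:ℕ)) ≤ s B := hsmono (hBsub i)
          nlinarith
      have part2 : ((i:ℕ):ℝ) * sumDisp O/((n:ℝ)*((n:ℝ)-1))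
          ≤ setDist (O \ partialSet xs (i:ℕ)) (partialSet xs (i:ℕ))/(((O \ partialSet xs (i:ℕ)).card):ℝ) := by
        rcases Nat.lt_or_ge n 2 with h2 | h2
        · have hi0 : ((i:ℕ):ℝ) = 0 := by
            have := i.isLt
            have : (i:ℕ) = 0 := by omega
            exact_mod_cast this
          rw [hi0]
          simp only [zero_mul, zero_div]
          exact div_nonneg (setDist_nonneg _ _) hmpos.le
        · have hn2 : (2:ℝ) ≤ (n:ℝ) := by exact_mod_cast h2
          have hden : (0:ℝ) < (n:ℝ)*((n:ℝ)-1) := by nlinarith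
          rw [div_le_div_iff₀ hden hmpos]
          have hcore := core_lemma O (partialSet xs (i:ℕ))
            (by rw [hGicard, hO, hBstar]; exact le_of_lt i.isLt) hSine
          rw [hGicard] at hcore
          have hOc : ((O.card):ℝ) = (n:ℝ) := by rw [hO, hBstar]
          rw [hOc] at hcore
          nlinarith [hcore]
      -- combine
      have hfin : α * ((γ/2) * (s (partialSet xs (i:ℕ) ∪ O) - s (partialSet xs (i:ℕ)))
            + lam * setDist (O \ partialSet xs (i:ℕ)) (partialSet xs (i:ℕ)))
            / (((O \ partialSet xs (i:ℕ)).card):ℝ)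
          ≤ margGain T (xs i) (partialSet xs (i:ℕ)) := by
        rw [div_le_iff₀ hmpos]
        linarith [claim]
      have p1 := mul_le_mul_of_nonneg_left part1 (show (0:ℝ) ≤ α*(γ/2) by positivity)
      have p2 := mul_le_mul_of_nonneg_left part2 (show (0:ℝ) ≤ α*lam by positivity)
      have hexp : α*(γ/2)*((s (partialSet xs (i:ℕ) ∪ O) - s (partialSet xs (i:ℕ)))/(((O \ partialSet xs (i:ℕ)).card):ℝ))
            + α*lam*(setDist (O \ partialSet xs (i:ℕ)) (partialSet xs (i:ℕ))/(((O \ partialSet xs (i:ℕ)).card):ℝ))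
          = α * ((γ/2) * (s (partialSet xs (i:ℕ) ∪ O) - s (partialSet xs (i:ℕ)))
            + lam * setDist (O \ partialSet xs (i:ℕ)) (partialSet xs (i:ℕ)))
            / (((O \ partialSet xs (i:ℕ)).card):ℝ) := by
        ring
      linarith [p1, p2, hfin, hexp.le, hexp.ge]
    -- sum the key inequality over all steps
    have hsum := Finset.sum_le_sum (fun i (_ : i ∈ Finset.univ) => key i)
    have htop := telescope_top xs T
    have hgauss : ∑ i : Fin n, ((i:ℕ):ℝ) = (n:ℝ)*((n:ℝ)-1)/2 := by
      rw [Fin.sum_univ_eq_sum_range (fun i => ((i:ℕ):ℝ)) n]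
      have h4 := congrArg (fun t : ℕ => (t:ℝ)) (Finset.sum_range_id_mul_two n)
      push_cast [Nat.cast_sub hn] at h4
      linarith [h4]
    have hsumlhs : ∑ i : Fin n, (α*(γ/2)*((s O - s B)/(n:ℝ))
          + α*lam*(((i:ℕ):ℝ) * sumDisp O/((n:ℝ)*((n:ℝ)-1))))
        = α*(γ/2)*(s O - s B)
          + α*lam*sumDisp O*(((n:ℝ)*((n:ℝ)-1)/2)/((n:ℝ)*((n:ℝ)-1))) := by
      rw [Finset.sum_add_distrib, Finset.sum_const, Finset.card_univ, Fintype.card_fin,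
        nsmul_eq_mul]
      congr 1
      · field_simp
      · calc ∑ i : Fin n, α*lam*(((i:ℕ):ℝ) * sumDisp O/((n:ℝ)*((n:ℝ)-1)))
            = ∑ i : Fin n, (α*lam*sumDisp O/((n:ℝ)*((n:ℝ)-1))) * ((i:ℕ):ℝ) :=
              Finset.sum_congr rfl (fun i _ => by ring)
          _ = _ := by rw [← Finset.mul_sum, hgauss]; ring
    have hdisp : (α*γ/2)*(lam*sumDisp O)
        ≤ α*lam*sumDisp O*(((n:ℝ)*((n:ℝ)-1)/2)/((n:ℝ)*((n:ℝ)-1))) := by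
      rcases Nat.lt_or_ge n 2 with h2 | h2
      · have hn1 : n = 1 := by omega
        have hcard1 : O.card = 1 := by rw [hO, hBstar, hn1]
        obtain ⟨o, ho⟩ := Finset.card_eq_one.mp hcard1
        rw [ho, sumDisp_singleton]
        simp
      · have hn2 : (2:ℝ) ≤ (n:ℝ) := by exact_mod_cast h2
        have hden : (0:ℝ) < (n:ℝ)*((n:ℝ)-1) := by nlinarith
        have hsimp : ((n:ℝ)*((n:ℝ)-1)/2)/((n:ℝ)*((n:ℝ)-1)) = 1/2 := by
          rw [div_right_comm, div_self hden.ne']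
        rw [hsimp]
        have hd0 := sumDisp_nonneg O
        nlinarith [mul_nonneg (mul_nonneg hα0.le hlam.le) hd0]
    have hTB : T B = (1/2)*s B + lam * sumDisp B := rfl
    have hTe : T ∅ = (1/2)*s ∅ := by
      rw [show T ∅ = (1/2)*s ∅ + lam * sumDisp ∅ from rfl, sumDisp_empty]
      ring
    have hse := hs_nonneg (∅ : Finset X)
    have hsB := hs_nonneg B
    -- final arithmetic
    rw [htop] at hTB
    nlinarith [hsum, hsumlhs, hdisp, mul_nonneg (sub_nonneg.mpr hag) hsB,
      mul_nonneg (mul_nonneg hα0.le hγ0.le) hsB]
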